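/- Under the hypotheses of the previous two lemmas for a single node — namely (i) 2·log2(μ)·∑_{j∈A} s_j ≥ C_final where A is the set of contents cached online, (ii) ∑_{j∈Q} s_j ≤ C* ≤ C_final for the set Q of contents cached offline but not online — any offline solution A* satisfies ∑_{j∈A*} s_j ≤ 2·log2(2μ)·∑_{j∈A} s_j. -/

import Mathlib

/-- Single-node Lemma 3: combining the two lemmas, the offline saving is at
most `2 log2(2μ)` times the online saving. -/
theorem stmt_8 (μ Cstar Cfinal : ℝ) (hμ : 1 < μ) (s : ℕ → ℝ) (hs : ∀ j, 0 ≤ s j)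
    (A Astar : Finset ℕ)
    (h1 : 2 * Real.logb 2 μ * ∑ j ∈ A, s j ≥ Cfinal)
    (h2 : ∑ j ∈ Astar \ A, s j ≤ Cstar) (h3 : Cstar ≤ Cfinal) :
    ∑ j ∈ Astar, s j ≤ 2 * Real.logb 2 (2 * μ) * ∑ j ∈ A, s j := by
  have hsA : (0:ℝ) ≤ ∑ j ∈ A, s j := Finset.sum_nonneg fun j _ => hs j
  have hsplit : ∑ j ∈ Astar, s j ≤ ∑ j ∈ Astar \ A, s j + ∑ j ∈ A, s j := by
    have : ∑ j ∈ Astar, s j ≤ ∑ j ∈ Astar ∪ A, s j :=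
      Finset.sum_le_sum_of_subset_of_nonneg (Finset.subset_union_left) fun j _ _ => hs j
    calc ∑ j ∈ Astar, s j ≤ ∑ j ∈ Astar ∪ A, s j := this
      _ = ∑ j ∈ Astar \ A, s j + ∑ j ∈ A, s j := by
          rw [← Finset.sum_union (Finset.sdiff_disjoint), Finset.sdiff_union_self_eq_union]
  have hlog : Real.logb 2 (2 * μ) = 1 + Real.logb 2 μ := by
    rw [Real.logb_mul (by norm_num) (by linarith), Real.logb_self_eq_one (by norm_num : (1:ℝ) < 2)]
  calc ∑ j ∈ Astar, s j ≤ ∑ j ∈ Astar \ A, s j + ∑ j ∈ A, s j := hsplit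
    _ ≤ Cfinal + ∑ j ∈ A, s j := by linarith
    _ ≤ 2 * Real.logb 2 μ * ∑ j ∈ A, s j + ∑ j ∈ A, s j := by linarith
    _ ≤ 2 * Real.logb 2 (2 * μ) * ∑ j ∈ A, s j := by rw [hlog]; nlinarith
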